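/- Let gcd(s,5)=1 and f(x) = a_0x + a_1x^{q^s} - x^{q^{2s}} over F_{q^5}. Then f has exactly q^2 roots in F_{q^5} if and only if N_{q^5/q}(a_0) = -1 and a_1^{q^s+1} + a_0^{q^s} = a_1^{q^{3s}}·a_0^{q^{2s}+q^s+1}. -/

import Mathlib

namespace Stmt15

/-- If `5 ∤ m` then `q^5 - 1` does not divide `q^m - 1`. -/
lemma nt5 {q m : ℕ} (hq2 : 2 ≤ q) (hm : ¬ 5 ∣ m) (hdvd : q ^ 5 - 1 ∣ q ^ m - 1) : False := by
  set r := m % 5 with hr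
  set t := m / 5 with ht
  have hrlt : r < 5 := Nat.mod_lt _ (by norm_num)
  have hrne : r ≠ 0 := fun h => hm (Nat.dvd_of_mod_eq_zero h)
  have hmrt : m = 5 * t + r := (Nat.div_add_mod m 5).symm
  have h1q : (1 : ℤ) ≤ (q : ℤ) := by exact_mod_cast Nat.one_le_of_lt hq2
  have hcast : ∀ k : ℕ, ((q ^ k - 1 : ℕ) : ℤ) = (q : ℤ) ^ k - 1 := by
    intro k
    have : 1 ≤ q ^ k := Nat.one_le_pow _ _ (by omega)
    push_cast [this]
    ring
  have h1 : ((q : ℤ) ^ 5 - 1) ∣ ((q : ℤ) ^ m - 1) := by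
    rw [← hcast, ← hcast]
    exact_mod_cast Int.natCast_dvd_natCast.mpr hdvd
  have h2 : ((q : ℤ) ^ 5 - 1) ∣ ((q : ℤ) ^ (5 * t) - 1) := by
    rw [pow_mul]
    exact sub_one_dvd_pow_sub_one _ _
  have h3 : ((q : ℤ) ^ 5 - 1) ∣ ((q : ℤ) ^ r - 1) := by
    have e : (q : ℤ) ^ r - 1 = ((q : ℤ) ^ m - 1) - (q : ℤ) ^ r * ((q : ℤ) ^ (5 * t) - 1) := by
      rw [hmrt, pow_add]
      ring
    rw [e]
    exact dvd_sub h1 (Dvd.dvd.mul_left h2 _)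
  have hlt : (q : ℤ) ^ r - 1 < (q : ℤ) ^ 5 - 1 := by
    have : (q : ℤ) ^ r < (q : ℤ) ^ 5 :=
      pow_lt_pow_right₀ (by exact_mod_cast hq2) hrlt
    omega
  have hpos : 0 < (q : ℤ) ^ r - 1 := by
    have : (2 : ℤ) ≤ (q : ℤ) := by exact_mod_cast hq2
    have h2r : (2 : ℤ) ^ 1 ≤ (q : ℤ) ^ r := by
      calc (2 : ℤ) ^ 1 ≤ (2 : ℤ) ^ r := pow_le_pow_right₀ (by norm_num) (by omega)
        _ ≤ (q : ℤ) ^ r := pow_le_pow_left₀ (by norm_num) this r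
    omega
  have := Int.le_of_dvd hpos h3
  omega

/-- `s^4 ≡ 1 mod 5` when `gcd s 5 = 1`. -/
lemma s4mod (s : ℕ) (hs : Nat.gcd s 5 = 1) : s ^ 4 % 5 = 1 := by
  have h5 : ¬ 5 ∣ s := by
    intro h
    rw [Nat.gcd_comm, Nat.gcd_eq_left h] at hs
    omega
  have hmod : s % 5 ≠ 0 := fun h => h5 (Nat.dvd_of_mod_eq_zero h)
  have hlt : s % 5 < 5 := Nat.mod_lt _ (by norm_num)
  have key : s ^ 4 % 5 = (s % 5) ^ 4 % 5 := Nat.pow_mod s 4 5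
  interval_cases h : s % 5 <;> simp_all


variable {L : Type*} [Field L]

/-! ### Algebraic identities for the twisted 2×2 matrix product -/
theorem entries_of_cond (σ : L →+* L)
    (c0 c1 c2 c3 c4 b0 b1 b2 b3 b4 : L)
    (hc0 : σ c0 = c1) (hc1 : σ c1 = c2) (hc2 : σ c2 = c3) (hc3 : σ c3 = c4) (hc4 : σ c4 = c0)
    (hb0 : σ b0 = b1) (hb1 : σ b1 = b2) (hb2 : σ b2 = b3) (hb3 : σ b3 = b4) (hb4 : σ b4 = b0)
    (hA : c0*c1*c2*c3*c4 = -1) (hB : c1 + b1*b0 = b3*(c2*c1*c0)) :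
    c3*b1*c0 + b3*c2*c0 + b3*b2*b1*c0 = 1 ∧
    c3*c1 + c3*b1*b0 + b3*c2*b0 + b3*b2*c1 + b3*b2*b1*b0 = 0 ∧
    c4*(c2*c0 + b2*b1*c0) + b4*(c3*b1*c0 + b3*c2*c0 + b3*b2*b1*c0) = 0 ∧
    c4*(c2*b0 + b2*c1 + b2*b1*b0) + b4*(c3*c1 + c3*b1*b0 + b3*c2*b0 + b3*b2*c1 + b3*b2*b1*b0) = 1 := by
  have hB1 : c2 + b2*b1 = b4*(c3*c2*c1) := by
    have h := congrArg σ hB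
    simpa only [map_add, map_mul, hc0, hc1, hc2, hc3, hc4, hb0, hb1, hb2, hb3, hb4] using h
  have hB2 : c3 + b3*b2 = b0*(c4*c3*c2) := by
    have h := congrArg σ hB1
    simpa only [map_add, map_mul, hc0, hc1, hc2, hc3, hc4, hb0, hb1, hb2, hb3, hb4] using h
  have hB3 : c4 + b4*b3 = b1*(c0*c4*c3) := by
    have h := congrArg σ hB2
    simpa only [map_add, map_mul, hc0, hc1, hc2, hc3, hc4, hb0, hb1, hb2, hb3, hb4] using h
  refine ⟨?_, ?_, ?_, ?_⟩
  · linear_combination c0*b3*hB1 + c0*c1*c2*c3*hB3 + (c0*c3*b1 - 1)*hA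
  · linear_combination (c3 + b3*b2)*hB + b3*c2*c1*c0*hB2 + b3*c2*b0*hA
  · linear_combination (c4*c0 + b4*b3*c0)*hB1 + b4*c0*c1*c2*c3*hB3 + b4*c0*c3*b1*hA
  · linear_combination (c4*b2 + b4*(c3 + b3*b2))*hB + (c4*c2*c1*c0 + b4*b3*c2*c1*c0)*hB2
      + (c4*c2*b0 - 1 + b4*b3*c2*b0)*hA

/-- Forward: the four matrix-product entries imply the two conditions. -/
theorem cond_of_entries (σ : L →+* L)
    (c0 c1 c2 c3 c4 b0 b1 b2 b3 b4 : L)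
    (hc0 : σ c0 = c1) (hc1 : σ c1 = c2) (hc2 : σ c2 = c3) (hc3 : σ c3 = c4) (hc4 : σ c4 = c0)
    (hb0 : σ b0 = b1) (hb1 : σ b1 = b2) (hb2 : σ b2 = b3) (hb3 : σ b3 = b4) (hb4 : σ b4 = b0)
    (h1 : c3*b1*c0 + b3*c2*c0 + b3*b2*b1*c0 = 1)
    (h2 : c3*c1 + c3*b1*b0 + b3*c2*b0 + b3*b2*c1 + b3*b2*b1*b0 = 0)
    (h3 : c4*(c2*c0 + b2*b1*c0) + b4*(c3*b1*c0 + b3*c2*c0 + b3*b2*b1*c0) = 0)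
    (h4 : c4*(c2*b0 + b2*c1 + b2*b1*b0) + b4*(c3*c1 + c3*b1*b0 + b3*c2*b0 + b3*b2*c1 + b3*b2*b1*b0) = 1) :
    c0*c1*c2*c3*c4 = -1 ∧ c1 + b1*b0 = b3*(c2*c1*c0) := by
  have hA : c0*c1*c2*c3*c4 = -1 := by
    linear_combination (c4*(c2*c0 + b2*b1*c0) + b4)*h2 - (c4*(c2*b0 + b2*c1 + b2*b1*b0))*h1 - h4
  have h40 : c4*c0 ≠ 0 := by
    intro h
    have : c0*c1*c2*c3*c4 = 0 := by
      rcases mul_eq_zero.mp h with h' | h' <;> rw [h'] <;> ring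
    rw [hA] at this
    exact absurd this (by norm_num)
  have hB1 : c2 + b2*b1 = b4*(c3*c2*c1) := by
    apply mul_left_cancel₀ h40
    linear_combination h3 - b4*h1 - b4*hA
  have hB2 : c3 + b3*b2 = b0*(c4*c3*c2) := by
    have h := congrArg σ hB1
    simpa only [map_add, map_mul, hc0, hc1, hc2, hc3, hc4, hb0, hb1, hb2, hb3, hb4] using h
  have hB3 : c4 + b4*b3 = b1*(c0*c4*c3) := by
    have h := congrArg σ hB2
    simpa only [map_add, map_mul, hc0, hc1, hc2, hc3, hc4, hb0, hb1, hb2, hb3, hb4] using h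
  have hB4 : c0 + b0*b4 = b2*(c1*c0*c4) := by
    have h := congrArg σ hB3
    simpa only [map_add, map_mul, hc0, hc1, hc2, hc3, hc4, hb0, hb1, hb2, hb3, hb4] using h
  have hB : c1 + b1*b0 = b3*(c2*c1*c0) := by
    have h := congrArg σ hB4
    simpa only [map_add, map_mul, hc0, hc1, hc2, hc3, hc4, hb0, hb1, hb2, hb3, hb4] using h
  exact ⟨hA, hB⟩

/-! ### The semilinear map τ and its fifth iterate -/

def tau (ρ : L →+* L) (a₀ a₁ : L) : L × L → L × L :=
  fun v => (ρ v.2, ρ (a₀ * v.1 + a₁ * v.2))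

theorem tau_add (ρ : L →+* L) (a₀ a₁ : L) (u v : L × L) :
    tau ρ a₀ a₁ (u + v) = tau ρ a₀ a₁ u + tau ρ a₀ a₁ v := by
  simp only [tau, Prod.fst_add, Prod.snd_add, Prod.mk_add_mk, Prod.mk.injEq]
  constructor
  · rw [map_add]
  · rw [show a₀ * (u.1 + v.1) + a₁ * (u.2 + v.2)
        = (a₀ * u.1 + a₁ * u.2) + (a₀ * v.1 + a₁ * v.2) by ring, map_add]

theorem tau_smul (ρ : L →+* L) (a₀ a₁ : L) (k : L) (u : L × L) :
    tau ρ a₀ a₁ (k * u.1, k * u.2)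
      = (ρ k * (tau ρ a₀ a₁ u).1, ρ k * (tau ρ a₀ a₁ u).2) := by
  simp only [tau, Prod.mk.injEq]
  constructor
  · rw [map_mul]
  · rw [show a₀ * (k * u.1) + a₁ * (k * u.2) = k * (a₀ * u.1 + a₁ * u.2) by ring, map_mul]

theorem tau_combo (ρ : L →+* L) (a₀ a₁ : L) (k m : L) (u w : L × L) :
    tau ρ a₀ a₁ (k * u.1 + m * w.1, k * u.2 + m * w.2)
      = (ρ k * (tau ρ a₀ a₁ u).1 + ρ m * (tau ρ a₀ a₁ w).1,
         ρ k * (tau ρ a₀ a₁ u).2 + ρ m * (tau ρ a₀ a₁ w).2) := by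
  simp only [tau, Prod.mk.injEq]
  constructor
  · rw [map_add, map_mul, map_mul]
  · rw [show a₀ * (k * u.1 + m * w.1) + a₁ * (k * u.2 + m * w.2)
        = k * (a₀ * u.1 + a₁ * u.2) + m * (a₀ * w.1 + a₁ * w.2) by ring,
      map_add, map_mul, map_mul]

theorem tau5 (ρ : L →+* L) (c0 c1 c2 c3 c4 b0 b1 b2 b3 b4 : L)
    (hc0 : ρ c0 = c4) (hc1 : ρ c1 = c0) (hc2 : ρ c2 = c1) (hc3 : ρ c3 = c2) (hc4 : ρ c4 = c3)
    (hb0 : ρ b0 = b4) (hb1 : ρ b1 = b0) (hb2 : ρ b2 = b1) (hb3 : ρ b3 = b2) (hb4 : ρ b4 = b3)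
    (x y : L) (hx : ρ (ρ (ρ (ρ (ρ x)))) = x) (hy : ρ (ρ (ρ (ρ (ρ y)))) = y) :
    tau ρ c0 b0 (tau ρ c0 b0 (tau ρ c0 b0 (tau ρ c0 b0 (tau ρ c0 b0 (x, y))))) =
      ((c3*b1*c0 + b3*c2*c0 + b3*b2*b1*c0)*x
        + (c3*c1 + c3*b1*b0 + b3*c2*b0 + b3*b2*c1 + b3*b2*b1*b0)*y,
       (c4*(c2*c0 + b2*b1*c0) + b4*(c3*b1*c0 + b3*c2*c0 + b3*b2*b1*c0))*x
        + (c4*(c2*b0 + b2*c1 + b2*b1*b0)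
            + b4*(c3*c1 + c3*b1*b0 + b3*c2*b0 + b3*b2*c1 + b3*b2*b1*b0))*y) := by
  simp only [tau, map_add, map_mul, hc0, hc1, hc2, hc3, hc4, hb0, hb1, hb2, hb3, hb4, hx, hy]
  rw [Prod.mk.injEq]
  constructor <;> ring

/-! ### The key abstract equivalence -/

theorem key (q : ℕ) (hq2 : 2 ≤ q) [Fintype L] (σ : L →+* L)
    (hσ5 : ∀ x : L, σ (σ (σ (σ (σ x)))) = x)
    (hK : ({c : L | σ c = c}).ncard = q)
    (hartin : ∀ k0 k1 k2 k3 k4 : L,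
      (∀ c : L, k0 * c + k1 * σ (σ (σ (σ c))) + k2 * σ (σ (σ c)) + k3 * σ (σ c) + k4 * σ c = 0)
      → k0 = 0)
    (a₀ a₁ : L) :
    ({x : L | a₀ * x + a₁ * σ x - σ (σ x) = 0}).ncard = q ^ 2 ↔
      (a₀ * σ a₀ * σ (σ a₀) * σ (σ (σ a₀)) * σ (σ (σ (σ a₀))) = -1 ∧
       σ a₀ + σ a₁ * a₁ = σ (σ (σ a₁)) * (σ (σ a₀) * σ a₀ * a₀)) := by
  classical
  set ρ : L →+* L := ((σ.comp σ).comp σ).comp σ with hρdef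
  have hρ : ∀ x : L, ρ x = σ (σ (σ (σ x))) := fun x => rfl
  have hρσ : ∀ x : L, ρ (σ x) = x := fun x => by rw [hρ]; exact hσ5 x
  have hσρ : ∀ x : L, σ (ρ x) = x := fun x => by rw [hρ]; exact hσ5 x
  have hρ5 : ∀ x : L, ρ (ρ (ρ (ρ (ρ x)))) = x := fun x => by simp only [hρ, hσ5]
  have hρρ2 : ∀ x : L, ρ (ρ x) = σ (σ (σ x)) := fun x => by simp only [hρ, hσ5]
  have hρρ3 : ∀ x : L, ρ (ρ (ρ x)) = σ (σ x) := fun x => by simp only [hρ, hσ5]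
  have hρρ4 : ∀ x : L, ρ (ρ (ρ (ρ x))) = σ x := fun x => by simp only [hρ, hσ5]
  set τ : L × L → L × L := tau ρ a₀ a₁ with hτdef
  set Fix : Set (L × L) := {v | τ v = v} with hFixdef
  set R : Set L := {x : L | a₀ * x + a₁ * σ x - σ (σ x) = 0} with hRdef
  have hmem : ∀ v : L × L, τ v = v ↔ (v.2 = σ v.1 ∧ a₀ * v.1 + a₁ * v.2 = σ v.2) := by
    intro v
    constructor
    · intro h
      have h1 : ρ v.2 = v.1 := congrArg Prod.fst h
      have h2 : ρ (a₀ * v.1 + a₁ * v.2) = v.2 := congrArg Prod.snd h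
      constructor
      · rw [← h1, hσρ]
      · have h3 := congrArg σ h2
        rw [hσρ] at h3
        exact h3
    · rintro ⟨h1, h2⟩
      have e1 : ρ v.2 = v.1 := by rw [h1, hρσ]
      have e2 : ρ (a₀ * v.1 + a₁ * v.2) = v.2 := by rw [h2, hρσ]
      show (ρ v.2, ρ (a₀ * v.1 + a₁ * v.2)) = v
      rw [e1, e2]
  have hFixim : Fix = (fun x => (x, σ x)) '' R := by
    ext v
    simp only [hFixdef, Set.mem_setOf_eq, Set.mem_image, hRdef, hmem v]
    constructor
    · rintro ⟨h1, h2⟩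
      refine ⟨v.1, ?_, ?_⟩
      · rw [← h1]; linear_combination h2
      · rw [← h1]
    · rintro ⟨x, hx, rfl⟩
      exact ⟨rfl, by linear_combination hx⟩
  have hcardRF : R.ncard = Fix.ncard := by
    rw [hFixim]
    exact (Set.ncard_image_of_injective R (fun a b h => ((Prod.mk.injEq _ _ _ _).mp h).1)).symm
  have hscalar : ∀ k : L, ρ k = k ↔ σ k = k := by
    intro k
    constructor
    · intro h; conv_lhs => rw [← h]
      rw [hσρ]
    · intro h; conv_lhs => rw [← h]
      rw [hρσ]
  by_cases hcase : ∃ v₁ ∈ Fix, ∃ v₂ ∈ Fix, v₁.1 * v₂.2 - v₁.2 * v₂.1 ≠ 0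
  · -- CASE A : two independent fixed vectors
    obtain ⟨v₁, hv₁, v₂, hv₂, hd⟩ := hcase
    have hv₁' : τ v₁ = v₁ := hv₁
    have hv₂' : τ v₂ = v₂ := hv₂
    have hco : ∀ w : L × L, ∃ k m : L, w = (k * v₁.1 + m * v₂.1, k * v₁.2 + m * v₂.2) := by
      intro w
      refine ⟨(w.1 * v₂.2 - w.2 * v₂.1) / (v₁.1 * v₂.2 - v₁.2 * v₂.1),
              (v₁.1 * w.2 - v₁.2 * w.1) / (v₁.1 * v₂.2 - v₁.2 * v₂.1), ?_⟩
      rw [Prod.ext_iff]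
      constructor
      · dsimp only
        rw [div_mul_eq_mul_div, div_mul_eq_mul_div, ← add_div, eq_div_iff hd]
        ring
      · dsimp only
        rw [div_mul_eq_mul_div, div_mul_eq_mul_div, ← add_div, eq_div_iff hd]
        ring
    have huniq : ∀ k m k' m' : L,
        k * v₁.1 + m * v₂.1 = k' * v₁.1 + m' * v₂.1 →
        k * v₁.2 + m * v₂.2 = k' * v₁.2 + m' * v₂.2 → k = k' ∧ m = m' := by
      intro k m k' m' h1 h2
      constructor
      · have h : (k - k') * (v₁.1 * v₂.2 - v₁.2 * v₂.1) = 0 := by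
          linear_combination v₂.2 * h1 - v₂.1 * h2
        rcases mul_eq_zero.mp h with h' | h'
        · exact sub_eq_zero.mp h'
        · exact absurd h' hd
      · have h : (m - m') * (v₁.1 * v₂.2 - v₁.2 * v₂.1) = 0 := by
          linear_combination v₁.1 * h2 - v₁.2 * h1
        rcases mul_eq_zero.mp h with h' | h'
        · exact sub_eq_zero.mp h'
        · exact absurd h' hd
    have step : ∀ k m : L, τ (k * v₁.1 + m * v₂.1, k * v₁.2 + m * v₂.2)
        = (ρ k * v₁.1 + ρ m * v₂.1, ρ k * v₁.2 + ρ m * v₂.2) := by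
      intro k m
      rw [hτdef, tau_combo, ← hτdef, hv₁', hv₂']
    have tau5id : ∀ w : L × L, τ (τ (τ (τ (τ w)))) = w := by
      intro w
      obtain ⟨k, m, rfl⟩ := hco w
      rw [step, step, step, step, step, hρ5 k, hρ5 m]
    -- extract the entries of the matrix product
    have h10 := tau5id (1, 0)
    have h01 := tau5id (0, 1)
    rw [hτdef, tau5 ρ a₀ (σ a₀) (σ (σ a₀)) (σ (σ (σ a₀))) (σ (σ (σ (σ a₀))))
        a₁ (σ a₁) (σ (σ a₁)) (σ (σ (σ a₁))) (σ (σ (σ (σ a₁))))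
        (hρ a₀) (hρσ a₀) (hρσ (σ a₀)) (hρσ (σ (σ a₀))) (hρσ (σ (σ (σ a₀))))
        (hρ a₁) (hρσ a₁) (hρσ (σ a₁)) (hρσ (σ (σ a₁))) (hρσ (σ (σ (σ a₁))))
        1 0 (hρ5 1) (hρ5 0)] at h10
    rw [hτdef, tau5 ρ a₀ (σ a₀) (σ (σ a₀)) (σ (σ (σ a₀))) (σ (σ (σ (σ a₀))))
        a₁ (σ a₁) (σ (σ a₁)) (σ (σ (σ a₁))) (σ (σ (σ (σ a₁))))
        (hρ a₀) (hρσ a₀) (hρσ (σ a₀)) (hρσ (σ (σ a₀))) (hρσ (σ (σ (σ a₀))))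
        (hρ a₁) (hρσ a₁) (hρσ (σ a₁)) (hρσ (σ (σ a₁))) (hρσ (σ (σ (σ a₁))))
        0 1 (hρ5 0) (hρ5 1)] at h01
    have e1 := (Prod.mk.injEq _ _ _ _).mp h10 |>.1
    have e3 := (Prod.mk.injEq _ _ _ _).mp h10 |>.2
    have e2 := (Prod.mk.injEq _ _ _ _).mp h01 |>.1
    have e4 := (Prod.mk.injEq _ _ _ _).mp h01 |>.2
    rw [mul_one, mul_zero, add_zero] at e1 e3
    rw [mul_zero, mul_one, zero_add] at e2 e4
    obtain ⟨hA, hB⟩ := cond_of_entries σ a₀ (σ a₀) (σ (σ a₀)) (σ (σ (σ a₀))) (σ (σ (σ (σ a₀))))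
      a₁ (σ a₁) (σ (σ a₁)) (σ (σ (σ a₁))) (σ (σ (σ (σ a₁))))
      rfl rfl rfl rfl (hσ5 a₀) rfl rfl rfl rfl (hσ5 a₁) e1 e2 e3 e4
    -- the count
    have hFixEq : Fix = (fun km : L × L => (km.1 * v₁.1 + km.2 * v₂.1, km.1 * v₁.2 + km.2 * v₂.2))
        '' (({c : L | σ c = c}) ×ˢ ({c : L | σ c = c})) := by
      ext w
      constructor
      · intro hw
        obtain ⟨k, m, hwe⟩ := hco w
        have hwfix : τ w = w := hw
        rw [hwe, step] at hwfix
        have h1 := ((Prod.mk.injEq _ _ _ _).mp hwfix).1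
        have h2 := ((Prod.mk.injEq _ _ _ _).mp hwfix).2
        obtain ⟨hk, hm⟩ := huniq _ _ _ _ h1 h2
        exact ⟨(k, m), ⟨(hscalar k).mp hk, (hscalar m).mp hm⟩, hwe.symm⟩
      · rintro ⟨⟨k, m⟩, ⟨hk, hm⟩, rfl⟩
        show τ _ = _
        rw [step]
        rw [(hscalar k).mpr hk, (hscalar m).mpr hm]
    have hinj2 : Function.Injective
        (fun km : L × L => (km.1 * v₁.1 + km.2 * v₂.1, km.1 * v₁.2 + km.2 * v₂.2)) := by
      rintro ⟨k, m⟩ ⟨k', m'⟩ h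
      simp only [Prod.mk.injEq] at h
      obtain ⟨h1, h2⟩ := huniq k m k' m' h.1 h.2
      simp [h1, h2]
    have hcount : Fix.ncard = q * q := by
      rw [hFixEq, Set.ncard_image_of_injective _ hinj2,
        Set.ncard_eq_toFinset_card', Set.toFinset_prod, Finset.card_product,
        ← Set.ncard_eq_toFinset_card', hK]
    exact iff_of_true (by rw [hcardRF, hcount, pow_two]) ⟨hA, hB⟩
  · -- CASE B : no two independent fixed vectors
    push_neg at hcase
    apply iff_of_false
    · -- the count fails
      intro hcard
      have hle : Fix.ncard ≤ q := by
        by_cases h0 : ∀ v ∈ Fix, v = (0 : L × L)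
        · have hsub : Fix ⊆ {(0 : L × L)} := fun v hv => h0 v hv
          have := Set.ncard_le_ncard hsub (Set.finite_singleton _)
          rw [Set.ncard_singleton] at this
          omega
        · push_neg at h0
          obtain ⟨v₀, hv₀, hv₀ne⟩ := h0
          have hv₀' : τ v₀ = v₀ := hv₀
          have hv1or : v₀.1 ≠ 0 ∨ v₀.2 ≠ 0 := by
            by_contra hcon
            push_neg at hcon
            exact hv₀ne (Prod.ext hcon.1 hcon.2)
          have hsub : Fix ⊆ (fun c : L => (c * v₀.1, c * v₀.2)) '' {c : L | σ c = c} := by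
            intro w hw
            have hdet : v₀.1 * w.2 - v₀.2 * w.1 = 0 := hcase v₀ hv₀ w hw
            obtain ⟨c, hc⟩ : ∃ c : L, w = (c * v₀.1, c * v₀.2) := by
              rcases hv1or with h | h
              · refine ⟨w.1 / v₀.1, ?_⟩
                rw [Prod.ext_iff]
                constructor
                · field_simp
                · field_simp
                  linear_combination hdet
              · refine ⟨w.2 / v₀.2, ?_⟩
                rw [Prod.ext_iff]
                constructor
                · field_simp
                  linear_combination -hdet
                · field_simp
            have hwfix : τ w = w := hw
            rw [hc, hτdef, tau_smul, ← hτdef, hv₀'] at hwfix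
            have hfc : ρ c = c := by
              rcases hv1or with h | h
              · exact mul_right_cancel₀ h ((Prod.mk.injEq _ _ _ _).mp hwfix).1
              · exact mul_right_cancel₀ h ((Prod.mk.injEq _ _ _ _).mp hwfix).2
            exact ⟨c, (hscalar c).mp hfc, hc.symm⟩
          calc Fix.ncard ≤ ((fun c : L => (c * v₀.1, c * v₀.2)) '' {c : L | σ c = c}).ncard :=
                Set.ncard_le_ncard hsub (Set.toFinite _)
            _ ≤ ({c : L | σ c = c}).ncard := Set.ncard_image_le (Set.toFinite _)
            _ = q := hK
      rw [← hcardRF, hcard] at hle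
      nlinarith
    · -- the conditions fail
      rintro ⟨hA, hB⟩
      obtain ⟨e1, e2, e3, e4⟩ := entries_of_cond σ a₀ (σ a₀) (σ (σ a₀)) (σ (σ (σ a₀)))
        (σ (σ (σ (σ a₀)))) a₁ (σ a₁) (σ (σ a₁)) (σ (σ (σ a₁))) (σ (σ (σ (σ a₁))))
        rfl rfl rfl rfl (hσ5 a₀) rfl rfl rfl rfl (hσ5 a₁) hA hB
      have tau5id : ∀ w : L × L, τ (τ (τ (τ (τ w)))) = w := by
        intro w
        have h := tau5 ρ a₀ (σ a₀) (σ (σ a₀)) (σ (σ (σ a₀))) (σ (σ (σ (σ a₀))))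
          a₁ (σ a₁) (σ (σ a₁)) (σ (σ (σ a₁))) (σ (σ (σ (σ a₁))))
          (hρ a₀) (hρσ a₀) (hρσ (σ a₀)) (hρσ (σ (σ a₀))) (hρσ (σ (σ (σ a₀))))
          (hρ a₁) (hρσ a₁) (hρσ (σ a₁)) (hρσ (σ (σ a₁))) (hρσ (σ (σ (σ a₁))))
          w.1 w.2 (hρ5 w.1) (hρ5 w.2)
        rw [e3, e4, e1, e2] at h
        rw [hτdef]
        simpa using h
      -- build an annihilating functional on Fix
      obtain ⟨r1, r2, hrnz, hann⟩ : ∃ r1 r2 : L, ¬(r1 = 0 ∧ r2 = 0) ∧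
          ∀ w ∈ Fix, r1 * w.1 + r2 * w.2 = 0 := by
        by_cases h0 : ∀ v ∈ Fix, v = (0 : L × L)
        · refine ⟨1, 0, by simp, fun w hw => ?_⟩
          rw [h0 w hw]
          simp
        · push_neg at h0
          obtain ⟨v₀, hv₀, hv₀ne⟩ := h0
          refine ⟨-v₀.2, v₀.1, ?_, fun w hw => ?_⟩
          · rintro ⟨h1, h2⟩
            exact hv₀ne (Prod.ext h2 (by simpa using h1))
          · linear_combination hcase v₀ hv₀ w hw
      have hzero : ∀ v : L × L, r1 * v.1 + r2 * v.2 = 0 := by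
        intro v
        apply hartin (r1 * v.1 + r2 * v.2)
          (r1 * (τ v).1 + r2 * (τ v).2)
          (r1 * (τ (τ v)).1 + r2 * (τ (τ v)).2)
          (r1 * (τ (τ (τ v))).1 + r2 * (τ (τ (τ v))).2)
          (r1 * (τ (τ (τ (τ v)))).1 + r2 * (τ (τ (τ (τ v)))).2)
        intro c
        set u0 : L × L := (c * v.1, c * v.2) with hu0
        set u1 : L × L := (ρ c * (τ v).1, ρ c * (τ v).2) with hu1
        set u2 : L × L := (ρ (ρ c) * (τ (τ v)).1, ρ (ρ c) * (τ (τ v)).2) with hu2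
        set u3 : L × L := (ρ (ρ (ρ c)) * (τ (τ (τ v))).1, ρ (ρ (ρ c)) * (τ (τ (τ v))).2) with hu3
        set u4 : L × L := (ρ (ρ (ρ (ρ c))) * (τ (τ (τ (τ v)))).1,
          ρ (ρ (ρ (ρ c))) * (τ (τ (τ (τ v)))).2) with hu4
        have t1 : τ u0 = u1 := by rw [hu0, hτdef, tau_smul, ← hτdef, hu1]
        have t2 : τ u1 = u2 := by rw [hu1, hτdef, tau_smul, ← hτdef, hu2]
        have t3 : τ u2 = u3 := by rw [hu2, hτdef, tau_smul, ← hτdef, hu3]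
        have t4 : τ u3 = u4 := by rw [hu3, hτdef, tau_smul, ← hτdef, hu4]
        have t5 : τ u4 = u0 := by
          rw [hu4, hτdef, tau_smul, ← hτdef, hρ5 c, tau5id v, hu0]
        have hWfix : τ (u0 + u1 + u2 + u3 + u4) = u0 + u1 + u2 + u3 + u4 := by
          rw [hτdef, tau_add, tau_add, tau_add, tau_add, ← hτdef, t1, t2, t3, t4, t5]
          abel
        have hW := hann _ hWfix
        simp only [Prod.fst_add, Prod.snd_add, hu0, hu1, hu2, hu3, hu4] at hW
        rw [← hρ c, ← hρρ2 c, ← hρρ3 c, ← hρρ4 c]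
        linear_combination hW
      have hr1 : r1 = 0 := by have := hzero (1, 0); simpa using this
      have hr2 : r2 = 0 := by have := hzero (0, 1); simpa using this
      exact hrnz ⟨hr1, hr2⟩


end Stmt15

/-- For `gcd(s,5) = 1`, `f(x) = a_0 x + a_1 x^{q^s} - x^{q^{2s}}` over
`F_{q^5}` has exactly `q^2` roots iff `N_{q^5/q}(a_0) = -1` and
`a_1^{q^s+1} + a_0^{q^s} = a_1^{q^{3s}}·a_0^{q^{2s}+q^s+1}`. -/
theorem stmt15 (q s : ℕ) (hq : IsPrimePow q) (hs : Nat.gcd s 5 = 1)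
    (L : Type*) [Field L] [Fintype L] (hL : Fintype.card L = q ^ 5)
    (a₀ a₁ : L) :
    Set.ncard {x : L | a₀ * x + a₁ * x ^ q ^ s - x ^ q ^ (2 * s) = 0} = q ^ 2
      ↔ (a₀ ^ (1 + q + q ^ 2 + q ^ 3 + q ^ 4) = -1 ∧
         a₁ ^ (q ^ s + 1) + a₀ ^ q ^ s = a₁ ^ q ^ (3 * s) * a₀ ^ (q ^ (2 * s) + q ^ s + 1)) := by
  classical
  obtain ⟨p, e, hpp, he, hpe⟩ := hq
  have hp : p.Prime := Nat.prime_iff.mpr hpp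
  have hq2 : 2 ≤ q := by
    rw [← hpe]
    calc 2 ≤ p := hp.two_le
      _ ≤ p ^ e := Nat.le_self_pow (by omega) p
  haveI := Fact.mk hp
  have hchar : CharP L p := by
    obtain ⟨n, hrp, hcardeq⟩ := FiniteField.card L (ringChar L)
    have h1 : p ^ (e * 5) = ringChar L ^ (n : ℕ) := by
      rw [← hcardeq, hL, ← hpe, ← pow_mul]
    have hpd : p ∣ ringChar L ^ (n : ℕ) := by
      rw [← h1]
      exact dvd_pow_self p (by positivity)
    have hpd' : p ∣ ringChar L := hp.dvd_of_dvd_pow hpd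
    have : p = ringChar L := (Nat.prime_dvd_prime_iff_eq hp hrp).mp hpd'
    exact this ▸ ringChar.charP L
  haveI := hchar
  set σ : L →+* L := iterateFrobenius L p (e * s) with hσdef
  have hσ : ∀ x : L, σ x = x ^ q ^ s := by
    intro x
    rw [hσdef, iterateFrobenius_def, ← hpe, ← pow_mul]
  have hcardpow : ∀ (x : L) (n : ℕ), x ^ (q ^ 5) ^ n = x := by
    intro x n
    rw [← hL]
    exact FiniteField.pow_card_pow n x
  have hσ2 : ∀ x : L, σ (σ x) = x ^ q ^ (2 * s) := by
    intro x
    rw [hσ, hσ, ← pow_mul, ← pow_add, two_mul]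
  have hσ3 : ∀ x : L, σ (σ (σ x)) = x ^ q ^ (3 * s) := by
    intro x
    rw [hσ2, hσ, ← pow_mul, ← pow_add, show s + 2 * s = 3 * s by ring]
  have hσ4 : ∀ x : L, σ (σ (σ (σ x))) = x ^ q ^ (4 * s) := by
    intro x
    rw [hσ3, hσ, ← pow_mul, ← pow_add, show s + 3 * s = 4 * s by ring]
  have hσ5 : ∀ x : L, σ (σ (σ (σ (σ x)))) = x := by
    intro x
    rw [hσ4, hσ, ← pow_mul, ← pow_add, show s + 4 * s = 5 * s by ring,
      show q ^ (5 * s) = (q ^ 5) ^ s by rw [← pow_mul], hcardpow]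
  -- fixed points of σ
  have hpowiter : ∀ (c : L) (a : ℕ), c ^ a = c → ∀ n : ℕ, c ^ a ^ n = c := by
    intro c a hc n
    induction n with
    | zero => simp
    | succ n ih => rw [pow_succ, pow_mul, ih, hc]
  have hfixiff : ∀ c : L, σ c = c ↔ c ^ q = c := by
    intro c
    rw [hσ c]
    constructor
    · intro h
      have h4 := hpowiter c (q ^ s) h (s ^ 3)
      rw [← pow_mul, show s * s ^ 3 = s ^ 4 by ring] at h4
      have hs4 : s ^ 4 = 5 * (s ^ 4 / 5) + 1 := by
        have := Stmt15.s4mod s hs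
        omega
      rw [hs4, pow_add, pow_mul, pow_one, pow_mul, hcardpow c _] at h4
      exact h4
    · intro h
      exact hpowiter c q h s
  -- generator of the unit group
  obtain ⟨g, hg⟩ := IsCyclic.exists_generator (α := Lˣ)
  have horder : orderOf g = q ^ 5 - 1 := by
    rw [orderOf_eq_card_of_forall_mem_zpowers hg, Nat.card_units, Nat.card_eq_fintype_card, hL]
  have hq5pos : 2 ≤ q ^ 5 := by
    calc 2 ≤ q := hq2
      _ ≤ q ^ 5 := Nat.le_self_pow (by norm_num) q
  have hprim : IsPrimitiveRoot (g : L) (q ^ 5 - 1) := by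
    have := IsPrimitiveRoot.orderOf (g : L)
    rwa [orderOf_units, horder] at this
  have hdvd : q - 1 ∣ q ^ 5 - 1 := by
    have := Nat.pow_sub_one_dvd_pow_sub_one q (m := 1) (k := 5) (one_dvd 5)
    simpa using this
  have hprim' : IsPrimitiveRoot ((g : L) ^ ((q ^ 5 - 1) / (q - 1))) (q - 1) :=
    hprim.pow (by omega) (Nat.div_mul_cancel hdvd).symm
  have hsetK : {c : L | σ c = c} = insert (0 : L) ↑(Polynomial.nthRootsFinset (q - 1) (1 : L)) := by
    ext c
    simp only [Set.mem_setOf_eq, Set.mem_insert_iff, Finset.mem_coe,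
      Polynomial.mem_nthRootsFinset (show 0 < q - 1 by omega), hfixiff c]
    constructor
    · intro h
      by_cases hc : c = 0
      · exact Or.inl hc
      · refine Or.inr ?_
        have hcc : c ^ (q - 1) * c = 1 * c := by
          rw [one_mul, ← pow_succ, Nat.sub_add_cancel (by omega : 1 ≤ q)]
          exact h
        exact mul_right_cancel₀ hc hcc
    · rintro (h | h)
      · rw [h]
        exact zero_pow (by omega)
      · calc c ^ q = c ^ (q - 1) * c := by rw [← pow_succ, Nat.sub_add_cancel (by omega : 1 ≤ q)]
          _ = c := by rw [h, one_mul]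
  have hK : ({c : L | σ c = c}).ncard = q := by
    rw [hsetK, Set.ncard_insert_of_notMem ?notmem, Set.ncard_coe_finset,
      hprim'.card_nthRootsFinset]
    · omega
    case notmem =>
      intro hmem
      rw [Finset.mem_coe, Polynomial.mem_nthRootsFinset (show 0 < q - 1 by omega),
        zero_pow (by omega : q - 1 ≠ 0)] at hmem
      exact zero_ne_one hmem
  -- distinctness of the Frobenius powers
  have main : ∀ i j : ℕ, i < j → j < 5 → (∀ c : L, c ^ q ^ (i * s) = c ^ q ^ (j * s)) → False := by
    intro i j hij hj hfun
    have hgl : (g : L) ^ q ^ (i * s) = (g : L) ^ q ^ (j * s) := hfun g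
    have hgu : g ^ q ^ (i * s) = g ^ q ^ (j * s) := by
      apply Units.ext
      rw [Units.val_pow_eq_pow_val, Units.val_pow_eq_pow_val]
      exact hgl
    have hmodeq : q ^ (i * s) ≡ q ^ (j * s) [MOD q ^ 5 - 1] := by
      have := pow_eq_pow_iff_modEq.mp hgu
      rwa [horder] at this
    have hle : q ^ (i * s) ≤ q ^ (j * s) :=
      Nat.pow_le_pow_right (by omega) (Nat.mul_le_mul_right s (le_of_lt hij))
    have hdvd2 : q ^ 5 - 1 ∣ q ^ (j * s) - q ^ (i * s) := (Nat.modEq_iff_dvd' hle).mp hmodeq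
    have hsplit : q ^ (j * s) - q ^ (i * s) = q ^ (i * s) * (q ^ ((j - i) * s) - 1) := by
      rw [Nat.mul_sub, mul_one, ← pow_add, show i * s + (j - i) * s = j * s by
        rw [← Nat.add_mul]; congr 1; omega]
    have hcop : Nat.Coprime (q ^ 5 - 1) (q ^ (i * s)) := by
      apply Nat.Coprime.pow_right
      have hd2 : Nat.gcd (q ^ 5 - 1) q ∣ q ^ 5 := dvd_pow (Nat.gcd_dvd_right _ _) (by norm_num)
      have hd1 : Nat.gcd (q ^ 5 - 1) q ∣ q ^ 5 - 1 := Nat.gcd_dvd_left _ _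
      have h1 := Nat.dvd_sub hd2 hd1
      rw [show q ^ 5 - (q ^ 5 - 1) = 1 by omega] at h1
      exact Nat.dvd_one.mp h1
    have hdvd3 : q ^ 5 - 1 ∣ q ^ ((j - i) * s) - 1 := by
      rw [hsplit] at hdvd2
      exact (Nat.Coprime.dvd_of_dvd_mul_left hcop hdvd2)
    apply Stmt15.nt5 hq2 ?_ hdvd3
    intro h5
    rcases (Nat.Prime.dvd_mul (by norm_num)).mp h5 with h | h
    · omega
    · have : Nat.gcd s 5 = 5 := by
        rw [Nat.gcd_comm]
        exact Nat.gcd_eq_left h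
      omega
  have hpows : ∀ i j : ℕ, i < 5 → j < 5 → (∀ c : L, c ^ q ^ (i * s) = c ^ q ^ (j * s)) → i = j := by
    intro i j hi hj hfun
    rcases Nat.lt_trichotomy i j with h | h | h
    · exact absurd (main i j h hj hfun) (by simp)
    · exact h
    · exact absurd (main j i h hi (fun c => (hfun c).symm)) (by simp)
  -- Artin / Dedekind independence
  have hartin : ∀ k0 k1 k2 k3 k4 : L,
      (∀ c : L, k0 * c + k1 * σ (σ (σ (σ c))) + k2 * σ (σ (σ c)) + k3 * σ (σ c) + k4 * σ c = 0)
      → k0 = 0 := by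
    intro k0 k1 k2 k3 k4 h
    set F : Fin 5 → (L →* L) := fun i => powMonoidHom (q ^ ((i : ℕ) * s)) with hF
    have hFinj : Function.Injective F := by
      intro i j hij
      have happ : ∀ c : L, c ^ q ^ ((i : ℕ) * s) = c ^ q ^ ((j : ℕ) * s) := by
        intro c
        exact DFunLike.congr_fun hij c
      exact Fin.ext (hpows i j i.isLt j.isLt happ)
    have hli := (linearIndependent_monoidHom L L).comp F hFinj
    rw [Fintype.linearIndependent_iff] at hli
    have hz := hli ![k0, k4, k3, k2, k1] ?hsum 0
    · simpa using hz
    case hsum =>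
      funext c
      simp only [Fin.sum_univ_five, Function.comp_apply, Pi.add_apply, Pi.smul_apply,
        smul_eq_mul, Pi.zero_apply, Finset.sum_apply, hF, powMonoidHom_apply,
        Matrix.cons_val_zero, Matrix.cons_val_one, Matrix.head_cons,
        Matrix.cons_val_two, Matrix.tail_cons, Matrix.cons_val_three, Matrix.cons_val_four]
      have hc := h c
      rw [hσ4, hσ3, hσ2, hσ] at hc
      norm_num [show ((3 : Fin 5) : ℕ) = 3 from rfl, show ((4 : Fin 5) : ℕ) = 4 from rfl]
      linear_combination hc
  -- congruence machinery for the norm condition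
  have hq5pos2 : 2 ≤ q ^ 5 := by
    calc 2 ≤ q := hq2
      _ ≤ q ^ 5 := Nat.le_self_pow (by norm_num) q
  have hpowmod : ∀ x : L, x ≠ 0 → ∀ m n : ℕ,
      m % (q ^ 5 - 1) = n % (q ^ 5 - 1) → x ^ m = x ^ n := by
    intro x hx m n hmn
    have hxD : x ^ (q ^ 5 - 1) = 1 := by
      rw [← hL]
      exact FiniteField.pow_card_sub_one_eq_one x hx
    have hred : ∀ m : ℕ, x ^ m = x ^ (m % (q ^ 5 - 1)) := by
      intro m
      conv_lhs => rw [← Nat.div_add_mod m (q ^ 5 - 1)]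
      rw [pow_add, pow_mul, hxD, one_pow, one_mul]
    rw [hred m, hred n, hmn]
  have hterm : ∀ m : ℕ, q ^ m ≡ q ^ (m % 5) [MOD q ^ 5 - 1] := by
    intro m
    have h51 : q ^ 5 ≡ 1 [MOD q ^ 5 - 1] :=
      ((Nat.modEq_iff_dvd' (by omega : 1 ≤ q ^ 5)).mpr dvd_rfl).symm
    calc q ^ m = (q ^ 5) ^ (m / 5) * q ^ (m % 5) := by
          rw [← pow_mul, ← pow_add, Nat.div_add_mod]
      _ ≡ 1 ^ (m / 5) * q ^ (m % 5) [MOD q ^ 5 - 1] :=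
          Nat.ModEq.mul (h51.pow _) Nat.ModEq.rfl
      _ = q ^ (m % 5) := by rw [one_pow, one_mul]
  have hsmod : s % 5 = 1 ∨ s % 5 = 2 ∨ s % 5 = 3 ∨ s % 5 = 4 := by
    have h5 : ¬ 5 ∣ s := by
      intro h
      rw [Nat.gcd_comm, Nat.gcd_eq_left h] at hs
      omega
    omega
  have hperm : 1 + q ^ (s % 5) + q ^ ((2 * s) % 5) + q ^ ((3 * s) % 5) + q ^ ((4 * s) % 5)
      = 1 + q + q ^ 2 + q ^ 3 + q ^ 4 := by
    rw [Nat.mul_mod 2 s 5, Nat.mul_mod 3 s 5, Nat.mul_mod 4 s 5]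
    rcases hsmod with h | h | h | h <;> rw [h] <;> norm_num <;> ring
  have hexp : (1 + q ^ s + q ^ (2 * s) + q ^ (3 * s) + q ^ (4 * s)) % (q ^ 5 - 1)
      = (1 + q + q ^ 2 + q ^ 3 + q ^ 4) % (q ^ 5 - 1) := by
    have hm : (1 + q ^ s + q ^ (2 * s) + q ^ (3 * s) + q ^ (4 * s)) ≡
        (1 + q ^ (s % 5) + q ^ ((2 * s) % 5) + q ^ ((3 * s) % 5) + q ^ ((4 * s) % 5))
        [MOD q ^ 5 - 1] :=
      Nat.ModEq.add (Nat.ModEq.add (Nat.ModEq.add (Nat.ModEq.add (Nat.ModEq.refl 1)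
        (hterm s)) (hterm (2 * s))) (hterm (3 * s))) (hterm (4 * s))
    rw [hperm] at hm
    exact hm
  -- the three bridges
  have hcond1 : a₀ * σ a₀ * σ (σ a₀) * σ (σ (σ a₀)) * σ (σ (σ (σ a₀)))
      = a₀ ^ (1 + q + q ^ 2 + q ^ 3 + q ^ 4) := by
    rw [hσ4, hσ3, hσ2, hσ]
    by_cases ha : a₀ = 0
    · rw [ha]
      rw [zero_pow (by omega : 1 + q + q ^ 2 + q ^ 3 + q ^ 4 ≠ 0)]
      ring
    · calc a₀ * a₀ ^ q ^ s * a₀ ^ q ^ (2 * s) * a₀ ^ q ^ (3 * s) * a₀ ^ q ^ (4 * s)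
          = a₀ ^ (1 + q ^ s + q ^ (2 * s) + q ^ (3 * s) + q ^ (4 * s)) := by
            rw [pow_add, pow_add, pow_add, pow_add, pow_one]
      _ = a₀ ^ (1 + q + q ^ 2 + q ^ 3 + q ^ 4) := hpowmod a₀ ha _ _ hexp
  have hcond2a : σ a₀ + σ a₁ * a₁ = a₁ ^ (q ^ s + 1) + a₀ ^ q ^ s := by
    rw [hσ a₀, hσ a₁, pow_add, pow_one]
    ring
  have hcond2b : σ (σ (σ a₁)) * (σ (σ a₀) * σ a₀ * a₀)
      = a₁ ^ q ^ (3 * s) * a₀ ^ (q ^ (2 * s) + q ^ s + 1) := by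
    rw [hσ3, hσ2, hσ, pow_add, pow_add, pow_one]
  have hset : {x : L | a₀ * x + a₁ * x ^ q ^ s - x ^ q ^ (2 * s) = 0}
      = {x : L | a₀ * x + a₁ * σ x - σ (σ x) = 0} := by
    ext x
    simp only [Set.mem_setOf_eq, hσ, hσ2]
    rw [show (x ^ q ^ s) ^ q ^ s = x ^ q ^ (2 * s) by rw [← pow_mul, ← pow_add, two_mul]]
  rw [hset, Stmt15.key q hq2 σ hσ5 hK hartin a₀ a₁, hcond1, hcond2a, hcond2b]
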